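/- Let m ≥ 2 be an integer and let t = ⌊(m-1)/2⌋. Then Σ_{j=t+1}^{m-1} 2^j·C(m-1, j) - Σ_{j=0}^{t-1} 2^{j+1}·C(m-1, j) > 0. -/

import Mathlib

/-- For `m ≥ 2` and `t = ⌊(m-1)/2⌋`,
`Σ_{j=t+1}^{m-1} 2^j·C(m-1,j) - Σ_{j=0}^{t-1} 2^{j+1}·C(m-1,j) > 0`. -/
theorem stmt_2 (m : ℕ) (hm : 2 ≤ m) :
    0 < ∑ j ∈ Finset.Icc ((m - 1) / 2 + 1) (m - 1), (2 : ℤ) ^ j * ((m - 1).choose j : ℤ)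
        - ∑ j ∈ Finset.range ((m - 1) / 2), (2 : ℤ) ^ (j + 1) * ((m - 1).choose j : ℤ) := by
  obtain ⟨n, rfl⟩ : ∃ n, m = n + 1 := ⟨m - 1, by omega⟩
  have hn : 1 ≤ n := by omega
  simp only [Nat.add_sub_cancel]
  set t := n / 2 with ht
  rcases eq_or_lt_of_le hn with h1 | h2
  · have hn1 : n = 1 := h1.symm
    subst hn1
    norm_num [ht, Finset.Icc_self, Finset.sum_singleton]
  · have key1 : ∑ j ∈ Finset.range t, (2:ℤ)^(j+1) * (n.choose j : ℤ)
        < ∑ j ∈ Finset.range t, (2:ℤ)^(n-j) * (n.choose (n-j) : ℤ) := by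
      apply Finset.sum_lt_sum_of_nonempty
      · exact Finset.nonempty_range_iff.mpr (by omega)
      · intro j hj
        have hj' : j < t := Finset.mem_range.mp hj
        have hjn : j ≤ n := by omega
        rw [Nat.choose_symm hjn]
        have hc : 0 < (n.choose j : ℤ) := by exact_mod_cast Nat.choose_pos hjn
        have hp : (2:ℤ)^(j+1) < (2:ℤ)^(n-j) := by
          apply pow_lt_pow_right₀ (by norm_num)
          omega
        exact mul_lt_mul_of_pos_right hp hc
    have key2 : ∑ j ∈ Finset.range t, (2:ℤ)^(n-j) * (n.choose (n-j) : ℤ)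
        = ∑ k ∈ (Finset.range t).image (n - ·), (2:ℤ)^k * (n.choose k : ℤ) := by
      rw [Finset.sum_image]
      intro a ha b hb hab
      have ha' := Finset.mem_range.mp ha
      have hb' := Finset.mem_range.mp hb
      simp only at hab
      omega
    have key3 : ∑ k ∈ (Finset.range t).image (n - ·), (2:ℤ)^k * (n.choose k : ℤ)
        ≤ ∑ k ∈ Finset.Icc (t+1) n, (2:ℤ)^k * (n.choose k : ℤ) := by
      apply Finset.sum_le_sum_of_subset_of_nonneg
      · intro k hk
        simp only [Finset.mem_image, Finset.mem_range] at hk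
        obtain ⟨j, hj, rfl⟩ := hk
        simp only [Finset.mem_Icc]
        omega
      · intro k _ _
        positivity
    linarith
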